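/- Let Q(τ) = ∏_{j=1}^n (1 - β_j τ) with all β_j ≤ 0 and at least one β_j < 0, and μ < 0. Then the function φ(τ) = (e^{μτ}/Q(τ)) ∫_0^τ e^{-μx} Q(x) dx satisfies φ'(τ) > 0 for all τ > 0. -/

import Mathlib

open Real Filter intervalIntegral

/-- Let `Q τ = ∏ j, (1 - β j τ)` with all `β j ≤ 0` and at least one
`β j < 0`, and `μ < 0`. Then `φ τ = (e^{μτ}/Q τ) ∫_0^τ e^{-μx} Q x dx` satisfies
`φ'(τ) > 0` for all `τ > 0`. -/
theorem stmt_9 (n : ℕ) (β : Fin n → ℝ) (hβ : ∀ j, β j ≤ 0) (hβ' : ∃ j, β j < 0)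
    (μ : ℝ) (hμ : μ < 0) (Q φ : ℝ → ℝ)
    (hQ : ∀ τ : ℝ, Q τ = ∏ j, (1 - β j * τ))
    (hφ : ∀ τ : ℝ, φ τ =
      Real.exp (μ * τ) / Q τ * ∫ x in (0:ℝ)..τ, Real.exp (-μ * x) * Q x) :
    ∀ τ : ℝ, 0 < τ → 0 < deriv φ τ := by
  classical
  -- base polynomial
  set P : ℝ → ℝ := fun s => ∏ j, (1 - β j * s) with hP
  set G : ℝ → ℝ := fun s => Real.exp (-μ * s) * P s with hGdef
  set D : ℝ → ℝ := fun s => Real.exp (-μ * s) *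
      ((∑ j, (∏ k ∈ Finset.univ.erase j, (1 - β k * s)) * (-β j)) - μ * P s) with hDdef
  set F : ℝ → ℝ := fun s => ∫ x in (0:ℝ)..s, G x with hFdef
  have hcontP : Continuous P := by
    apply continuous_finset_prod
    intro j _
    fun_prop
  have hcontG : Continuous G := by fun_prop
  have hcontD : Continuous D := by
    apply Continuous.mul (by fun_prop)
    apply Continuous.sub _ (by fun_prop)
    apply continuous_finset_sum
    intro j _
    exact (continuous_finset_prod _ (fun k _ => by fun_prop)).mul continuous_const
  -- positivity of factors
  have hfac : ∀ (s : ℝ), 0 ≤ s → ∀ j, (0:ℝ) < 1 - β j * s := by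
    intro s hs j
    have : β j * s ≤ 0 := mul_nonpos_of_nonpos_of_nonneg (hβ j) hs
    linarith
  have hPpos : ∀ (s : ℝ), 0 ≤ s → 0 < P s :=
    fun s hs => Finset.prod_pos (fun j _ => hfac s hs j)
  have hGpos : ∀ (s : ℝ), 0 ≤ s → 0 < G s :=
    fun s hs => mul_pos (Real.exp_pos _) (hPpos s hs)
  -- derivative of G is D
  have hGD : ∀ s : ℝ, HasDerivAt G (D s) s := by
    intro s
    have hprod : HasDerivAt P (∑ j, (∏ k ∈ Finset.univ.erase j, (1 - β k * s)) * (-β j)) s := by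
      have := HasDerivAt.fun_finsetProd (u := Finset.univ)
        (f := fun j s => 1 - β j * s) (f' := fun j => -β j) (x := s)
        (fun j _ => by simpa using ((hasDerivAt_id s).const_mul (β j)).const_sub 1)
      simpa [smul_eq_mul] using this
    have hexp : HasDerivAt (fun s => Real.exp (-μ * s)) (-μ * Real.exp (-μ * s)) s := by
      simpa [mul_comm] using (((hasDerivAt_id s).const_mul (-μ)).exp)
    have := hexp.fun_mul hprod
    refine this.congr_deriv ?_
    simp [hDdef]
    ring
  -- derivative of F is G
  have hFG : ∀ s : ℝ, HasDerivAt F (G s) s := by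
    intro s
    exact intervalIntegral.integral_hasDerivAt_right
      (hcontG.intervalIntegrable _ _)
      hcontG.aestronglyMeasurable.stronglyMeasurableAtFilter
      hcontG.continuousAt
  -- φ = F / G
  have hφ' : φ = fun s => F s / G s := by
    funext s
    rw [hφ s, hQ s]
    simp only [hGdef, hFdef, hP, Real.exp_neg]
    rw [neg_mul, Real.exp_neg]
    simp only [div_eq_mul_inv, mul_inv, inv_inv]
    have : (fun x => Real.exp (-μ * x) * Q x) = fun x => Real.exp (-μ * x) * P x := by
      funext x; rw [hQ x]
    rw [this]
    ring
  intro τ hτ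
  have hGτ : 0 < G τ := hGpos τ hτ.le
  have hder : HasDerivAt φ ((G τ * G τ - F τ * D τ) / (G τ)^2) τ := by
    rw [hφ']
    exact (hFG τ).div (hGD τ) (ne_of_gt hGτ)
  rw [hder.deriv]
  apply div_pos _ (pow_pos hGτ 2)
  -- key inequality: F τ * D τ ≤ (G τ - 1) * G τ
  -- pointwise: for x ∈ [0, τ], D τ * G x ≤ D x * G τ
  have hDG : ∀ s : ℝ, 0 ≤ s → D s = G s * ((∑ j, (-β j) / (1 - β j * s)) - μ) := by
    intro s hs
    have hsum : (∑ j, (∏ k ∈ Finset.univ.erase j, (1 - β k * s)) * (-β j))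
        = P s * ∑ j, (-β j) / (1 - β j * s) := by
      rw [Finset.mul_sum]
      apply Finset.sum_congr rfl
      intro j _
      have hne : (1 - β j * s) ≠ 0 := ne_of_gt (hfac s hs j)
      have : P s = (1 - β j * s) * ∏ k ∈ Finset.univ.erase j, (1 - β k * s) :=
        (Finset.mul_prod_erase Finset.univ _ (Finset.mem_univ j)).symm
      rw [this]
      rw [mul_comm (1 - β j * s), mul_assoc, mul_div_assoc', mul_div_cancel_left₀ _ hne]
    simp only [hDdef, hGdef, hsum]
    ring
  have hpoint : ∀ x ∈ Set.Icc (0:ℝ) τ, D τ * G x ≤ D x * G τ := by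
    intro x hx
    obtain ⟨hx0, hxτ⟩ := hx
    rw [hDG τ hτ.le, hDG x hx0]
    have hrle : (∑ j, (-β j) / (1 - β j * τ)) - μ ≤ (∑ j, (-β j) / (1 - β j * x)) - μ := by
      have hsum : (∑ j, (-β j) / (1 - β j * τ)) ≤ ∑ j, (-β j) / (1 - β j * x) :=
        Finset.sum_le_sum (fun j _ =>
          div_le_div_of_nonneg_left (by linarith [hβ j]) (hfac x hx0 j)
            (by nlinarith [hβ j]))
      linarith
    have hrτ : 0 ≤ (∑ j, (-β j) / (1 - β j * τ)) - μ := by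
      have : 0 ≤ ∑ j, (-β j) / (1 - β j * τ) :=
        Finset.sum_nonneg (fun j _ => div_nonneg (by linarith [hβ j]) (hfac τ hτ.le j).le)
      linarith
    have hGx : 0 < G x := hGpos x hx0
    calc G τ * ((∑ j, (-β j) / (1 - β j * τ)) - μ) * G x
        ≤ G τ * ((∑ j, (-β j) / (1 - β j * x)) - μ) * G x := by
          apply mul_le_mul_of_nonneg_right _ hGx.le
          exact mul_le_mul_of_nonneg_left hrle hGτ.le
      _ = G x * ((∑ j, (-β j) / (1 - β j * x)) - μ) * G τ := by ring
  -- integral of D over [0,τ] equals G τ - 1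
  have hintD : (∫ x in (0:ℝ)..τ, D x) = G τ - 1 := by
    have : (∫ x in (0:ℝ)..τ, D x) = G τ - G 0 :=
      intervalIntegral.integral_eq_sub_of_hasDerivAt
        (fun x _ => hGD x) (hcontD.intervalIntegrable _ _)
    rw [this]
    simp [hGdef, hP]
  have hFτ : F τ = ∫ x in (0:ℝ)..τ, G x := rfl
  have hkey : F τ * D τ ≤ (G τ - 1) * G τ := by
    have h1 : (∫ x in (0:ℝ)..τ, (D x * G τ - D τ * G x)) =
        (G τ - 1) * G τ - D τ * F τ := by
      rw [intervalIntegral.integral_sub (f := fun x => D x * G τ) (g := fun x => D τ * G x)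
        ((hcontD.mul continuous_const).intervalIntegrable _ _)
        ((continuous_const.mul hcontG).intervalIntegrable _ _)]
      rw [intervalIntegral.integral_mul_const, intervalIntegral.integral_const_mul, hintD, hFτ]
    have h2 : 0 ≤ ∫ x in (0:ℝ)..τ, (D x * G τ - D τ * G x) := by
      apply intervalIntegral.integral_nonneg hτ.le
      intro x hx
      have := hpoint x hx
      linarith
    nlinarith [h1, h2]
  nlinarith [hkey, hGτ]
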